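/- Let p, q, r, s, y₀, y : ℝ → ℂ be sufficiently differentiable, with s nonvanishing, s² = r, y₀ nonvanishing satisfying y₀'' + p·y₀' + q·y₀ = 0, and y satisfying y'' + p·y' + (q − m·r)·y = 0 for a constant m ∈ ℂ. Set θ₀ = y₀'/y₀, ρ = −θ₀ − p − r'/(2r), and let ỹ = (1/s)·(y' − θ₀·y) be the Darboux transform of y. Then the vector (ỹ, ỹ')ᵀ equals P_m·(y, y')ᵀ, where P_m = (1/s)·[[−θ₀, 1], [m·r − θ₀·ρ, ρ]], and moreover P_m factors as P_m = L_m·R with L_m = [[0, 1], [m·r, ρ]] and R = (1/s)·[[1, 0], [−θ₀, 1]]. -/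

import Mathlib

/-- Proposition 1: Darboux transformation as a gauge transformation, with the
matrix factorization P_m = L_m · R. -/
theorem darboux_gauge_factorization
    (p q r s y₀ y θ₀ ρ yt : ℝ → ℂ) (m : ℂ)
    (hp : Differentiable ℝ p) (hq : Differentiable ℝ q)
    (hr : Differentiable ℝ r) (hr' : Differentiable ℝ (deriv r))
    (hy₀ : Differentiable ℝ y₀) (hy₀' : Differentiable ℝ (deriv y₀))
    (hy : Differentiable ℝ y) (hy' : Differentiable ℝ (deriv y))
    (hs : Differentiable ℝ s)
    (hs0 : ∀ x, s x ≠ 0) (hsr : ∀ x, (s x) ^ 2 = r x)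
    (hy₀0 : ∀ x, y₀ x ≠ 0)
    (hode0 : ∀ x, deriv (deriv y₀) x + p x * deriv y₀ x + q x * y₀ x = 0)
    (hodem : ∀ x, deriv (deriv y) x + p x * deriv y x + (q x - m * r x) * y x = 0)
    (hθ₀ : ∀ x, θ₀ x = deriv y₀ x / y₀ x)
    (hρ : ∀ x, ρ x = -θ₀ x - p x - deriv r x / (2 * r x))
    (hyt : ∀ x, yt x = (1 / s x) * (deriv y x - θ₀ x * y x))
    (P L R : ℝ → Matrix (Fin 2) (Fin 2) ℂ)
    (hP : ∀ x, P x = (1 / s x) • !![-θ₀ x, 1; m * r x - θ₀ x * ρ x, ρ x])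
    (hL : ∀ x, L x = !![0, 1; m * r x, ρ x])
    (hR : ∀ x, R x = (1 / s x) • !![1, 0; -θ₀ x, 1]) :
    (∀ x, ![yt x, deriv yt x] = (P x).mulVec ![y x, deriv y x]) ∧
    (∀ x, P x = L x * R x) := by

  constructor
  · intro x
    -- rewrite yt as an explicit function
    have hytfun : yt = fun t => (deriv y t - deriv y₀ t / y₀ t * y t) / s t := by
      funext t
      rw [hyt t, hθ₀ t]; field_simp
    have hr0 : r x ≠ 0 := by rw [← hsr x]; exact pow_ne_zero _ (hs0 x)
    -- derivative of s² = r
    have hsr' : deriv r x = 2 * s x * deriv s x := by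
      have h2 : (s * s) = r := funext fun t => by rw [Pi.mul_apply, ← hsr t]; ring
      have h1 := (hs x).hasDerivAt.mul (hs x).hasDerivAt
      rw [h2] at h1
      have := h1.deriv
      rw [this]; push_cast; ring
    -- derivative of yt
    have hnum : HasDerivAt (fun t => deriv y t - deriv y₀ t / y₀ t * y t)
        (deriv (deriv y) x -
          ((deriv (deriv y₀) x * y₀ x - deriv y₀ x * deriv y₀ x) / (y₀ x) ^ 2 * y x
            + deriv y₀ x / y₀ x * deriv y x)) x := by
      exact (hy' x).hasDerivAt.sub
        (((hy₀' x).hasDerivAt.div (hy₀ x).hasDerivAt (hy₀0 x)).mul (hy x).hasDerivAt)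
    have hgd := hnum.div (hs x).hasDerivAt (hs0 x)
    have hdyt : deriv yt x =
        ((deriv (deriv y) x -
            ((deriv (deriv y₀) x * y₀ x - deriv y₀ x * deriv y₀ x) / y₀ x ^ 2 * y x
              + deriv y₀ x / y₀ x * deriv y x)) * s x -
          (deriv y x - deriv y₀ x / y₀ x * y x) * deriv s x) / s x ^ 2 := by
      rw [hytfun]; exact hgd.deriv
    -- ODE substitutions
    have hode0x : deriv (deriv y₀) x = -(p x * deriv y₀ x) - q x * y₀ x := by
      have := hode0 x; linear_combination this
    have hodemx : deriv (deriv y) x = -(p x * deriv y x) - (q x - m * r x) * y x := by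
      have := hodem x; linear_combination this
    have h1 := hs0 x
    have h2 := hy₀0 x
    have e0 : yt x = (1 / s x) * (-θ₀ x) * y x + (1 / s x) * 1 * deriv y x := by
      rw [hyt x]; ring
    have e1 : deriv yt x = (1 / s x) * (m * r x - θ₀ x * ρ x) * y x
        + (1 / s x) * ρ x * deriv y x := by
      rw [hdyt, hρ x, hθ₀ x, hode0x, hodemx, hsr', ← hsr x]
      have h3 : (2:ℂ) * s x * deriv s x / (2 * s x ^ 2) = deriv s x / s x := by
        field_simp
      rw [h3, div_eq_iff (pow_ne_zero 2 h1)]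
      field_simp
      ring
    rw [hP x]
    funext i
    fin_cases i
    · simpa [Matrix.mulVec, dotProduct, Fin.sum_univ_two, Matrix.vecHead, Matrix.vecTail] using e0
    · simpa [Matrix.mulVec, dotProduct, Fin.sum_univ_two, Matrix.vecHead, Matrix.vecTail] using e1
  · intro x
    rw [hP x, hL x, hR x]
    ext i j
    fin_cases i <;> fin_cases j <;>
      simp [Matrix.mul_apply, Fin.sum_univ_two, Matrix.smul_apply] <;> ring
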